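/- Let γ > 0, 0 ≤ μ₀ ≤ 1, 0 ≤ μ₁ < 1, μ₀ ≠ μ₁, and σ = sgn(μ₁ - μ₀). If z : [0, T] → [0, 1] is absolutely continuous with z(0) = μ₀, z(T) = μ₁ and satisfies -γ(z + 1) ≤ ż ≤ γ(1 - z) almost everywhere, then T ≥ (1/γ) ln((1 - σ μ₀)/(1 - σ μ₁)). -/

import Mathlib

open Real Set MeasureTheory intervalIntegral

/-- Lower bound on the time needed to move the radius from `μ₀` to `μ₁`:
any absolutely continuous `z : [0,T] → [0,1]` with
`-γ(z+1) ≤ ż ≤ γ(1-z)` a.e. satisfies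
`T ≥ (1/γ) ln((1 - σμ₀)/(1 - σμ₁))` where `σ = sgn(μ₁ - μ₀)`. -/
theorem minimal_time_lower_bound (γ T μ₀ μ₁ σ : ℝ) (hγ : 0 < γ)
    (hμ₀ : μ₀ ∈ Set.Icc (0:ℝ) 1) (hμ₁0 : 0 ≤ μ₁) (hμ₁1 : μ₁ < 1)
    (hne : μ₀ ≠ μ₁) (hσ : σ = Real.sign (μ₁ - μ₀)) (hT : 0 ≤ T)
    (z z' : ℝ → ℝ)
    (hmap : ∀ t ∈ Set.Icc 0 T, z t ∈ Set.Icc (0:ℝ) 1)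
    (h0 : z 0 = μ₀) (h1 : z T = μ₁)
    (hint : IntervalIntegrable z' volume 0 T)
    (hac : ∀ t ∈ Set.Icc 0 T, z t = μ₀ + ∫ s in (0:ℝ)..t, z' s)
    (hineq : ∀ᵐ s, s ∈ Set.Icc 0 T →
      -γ * (z s + 1) ≤ z' s ∧ z' s ≤ γ * (1 - z s)) :
    (1/γ) * Real.log ((1 - σ * μ₀) / (1 - σ * μ₁)) ≤ T := by
  -- determine σ
  have hσ2 : σ = 1 ∧ μ₀ < μ₁ ∨ σ = -1 ∧ μ₁ < μ₀ := by
    rcases lt_or_gt_of_ne hne with h | h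
    · exact Or.inl ⟨by rw [hσ]; exact Real.sign_of_pos (by linarith), h⟩
    · exact Or.inr ⟨by rw [hσ]; exact Real.sign_of_neg (by linarith), h⟩
  have hp₀ : 0 < 1 - σ * μ₀ := by
    rcases hσ2 with ⟨h, hlt⟩ | ⟨h, hlt⟩ <;> subst h <;> nlinarith [hμ₀.1, hμ₀.2]
  have hp₁ : 0 < 1 - σ * μ₁ := by
    rcases hσ2 with ⟨h, _⟩ | ⟨h, _⟩ <;> subst h <;> nlinarith
  -- continuity of z on [0,T]
  have hzc : ContinuousOn z (Icc 0 T) := by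
    have hprim : ContinuousOn (fun t => μ₀ + ∫ s in (0:ℝ)..t, z' s) (Icc 0 T) := by
      apply continuousOn_const.add
      have h2 : IntegrableOn z' (uIcc 0 T) volume := by
        rw [uIcc_of_le hT]
        exact (integrableOn_Icc_iff_integrableOn_Ioc (by simp)).2 hint.1
      have := intervalIntegral.continuousOn_primitive_interval h2
      rwa [uIcc_of_le hT] at this
    exact hprim.congr hac
  -- clamp function
  set C : ℝ → ℝ := fun t => max 0 (min t T) with hCdef
  have hCcont : Continuous C := continuous_const.max (continuous_id.min continuous_const)
  have hCmem : ∀ t, C t ∈ Icc 0 T :=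
    fun t => ⟨le_max_left _ _, max_le hT (min_le_right _ _)⟩
  have hCeq : ∀ t ∈ Icc 0 T, C t = t := by
    intro t ht
    simp only [hCdef]
    rw [min_eq_left ht.2, max_eq_right ht.1]
  -- the unified radius defect function
  set u : ℝ → ℝ := fun t => 1 - σ * z (C t) with hudef
  have hu_cont : Continuous u :=
    continuous_const.sub (continuous_const.mul (hzc.comp_continuous hCcont hCmem))
  have hu0 : u 0 = 1 - σ * μ₀ := by
    simp only [hudef, hCeq 0 ⟨le_refl 0, hT⟩, h0]
  have huT : u T = 1 - σ * μ₁ := by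
    simp only [hudef, hCeq T ⟨hT, le_refl T⟩, h1]
  -- primitive of u
  set V : ℝ → ℝ := fun t => ∫ s in (0:ℝ)..t, u s with hVdef
  have hV : ∀ t, HasDerivAt V (u t) t := fun t =>
    intervalIntegral.integral_hasDerivAt_right (hu_cont.intervalIntegrable _ _)
      (hu_cont.stronglyMeasurableAtFilter _ _) hu_cont.continuousAt
  have hVcont : Continuous V := by
    rw [continuous_iff_continuousAt]; exact fun t => (hV t).continuousAt
  have hV0 : V 0 = 0 := intervalIntegral.integral_same
  -- key pointwise integral inequality
  have hptwise : ∀ t ∈ Icc 0 T, u t ≤ u T + γ * (V T - V t) := by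
    intro t ht
    have hsub : uIcc t T ⊆ uIcc 0 T := by
      rw [uIcc_of_le ht.2, uIcc_of_le hT]
      exact Icc_subset_Icc ht.1 le_rfl
    have hsub0 : uIcc 0 t ⊆ uIcc 0 T := by
      rw [uIcc_of_le ht.1, uIcc_of_le hT]
      exact Icc_subset_Icc le_rfl ht.2
    have hzT := hac T ⟨hT, le_refl T⟩
    have hzt := hac t ht
    have hdiff : z T - z t = ∫ s in t..T, z' s := by
      rw [hzT, hzt]
      rw [add_sub_add_left_eq_sub]
      exact intervalIntegral.integral_interval_sub_left hint (hint.mono_set hsub0)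
    have hudiff : u t - u T = ∫ s in t..T, σ * z' s := by
      rw [intervalIntegral.integral_const_mul, ← hdiff]
      simp only [hudef, hCeq t ht, hCeq T ⟨hT, le_refl T⟩]
      ring
    have hVdiff : V T - V t = ∫ s in t..T, u s := by
      exact intervalIntegral.integral_interval_sub_left
        (hu_cont.intervalIntegrable _ _) (hu_cont.intervalIntegrable _ _)
    have hmono : (∫ s in t..T, σ * z' s) ≤ ∫ s in t..T, γ * u s := by
      apply intervalIntegral.integral_mono_ae_restrict ht.2
        ((hint.mono_set hsub).const_mul σ)
        ((continuous_const.mul hu_cont).intervalIntegrable _ _)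
      rw [Filter.EventuallyLE, MeasureTheory.ae_restrict_iff' measurableSet_Icc]
      filter_upwards [hineq] with s hs hsmem
      have hs0T : s ∈ Icc 0 T := ⟨le_trans ht.1 hsmem.1, hsmem.2⟩
      have hb := hs hs0T
      show σ * z' s ≤ γ * u s
      simp only [hudef, hCeq s hs0T]
      rcases hσ2 with ⟨h, _⟩ | ⟨h, _⟩ <;> subst h <;> nlinarith [hb.1, hb.2]
    have : (∫ s in t..T, γ * u s) = γ * (V T - V t) := by
      rw [hVdiff, intervalIntegral.integral_const_mul]
    linarith [hudiff ▸ hmono, this ▸ hmono]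
  -- the auxiliary monotone function
  set Q : ℝ → ℝ := fun t => (V T - V t + u T / γ) * Real.exp (γ * t) with hQdef
  have hQ : ∀ t, HasDerivAt Q
      ((γ * (V T - V t + u T / γ) - u t) * Real.exp (γ * t)) t := by
    intro t
    have h1 : HasDerivAt (fun t => V T - V t + u T / γ) (-(u t)) t := by
      simpa using (((hasDerivAt_const t (V T)).sub (hV t)).add_const (u T / γ))
    have h2 : HasDerivAt (fun t => Real.exp (γ * t)) (γ * Real.exp (γ * t)) t := by
      have := ((hasDerivAt_id t).const_mul γ).exp
      simpa [mul_comm] using this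
    have : HasDerivAt (fun t => (V T - V t + u T / γ) * Real.exp (γ * t))
        (-(u t) * Real.exp (γ * t) + (V T - V t + u T / γ) * (γ * Real.exp (γ * t))) t :=
      h1.fun_mul h2
    convert this using 1
    ring
  have hmono : MonotoneOn Q (Icc 0 T) := by
    apply monotoneOn_of_deriv_nonneg (convex_Icc 0 T)
    · exact (continuous_iff_continuousAt.2 fun t => (hQ t).continuousAt).continuousOn
    · intro x hx
      exact (hQ x).differentiableAt.differentiableWithinAt
    · intro x hx
      rw [interior_Icc] at hx
      rw [(hQ x).deriv]
      have hpt := hptwise x ⟨hx.1.le, hx.2.le⟩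
      have hc : γ * (u T / γ) = u T := mul_div_cancel₀ _ (ne_of_gt hγ)
      have hexp : γ * (V T - V x + u T / γ) = γ * (V T - V x) + u T := by
        rw [mul_add, hc]
      have : 0 ≤ γ * (V T - V x + u T / γ) - u x := by rw [hexp]; linarith
      exact mul_nonneg this (Real.exp_pos _).le
  have hQ0T : Q 0 ≤ Q T := hmono ⟨le_refl 0, hT⟩ ⟨hT, le_refl T⟩ hT
  have hQ0 : Q 0 = V T + u T / γ := by
    simp [hQdef, hV0]
  have hQT : Q T = u T / γ * Real.exp (γ * T) := by
    simp [hQdef]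
  have hc : γ * (u T / γ) = u T := mul_div_cancel₀ _ (ne_of_gt hγ)
  -- combine: u 0 ≤ u T * exp (γ T)
  have hfinal : 1 - σ * μ₀ ≤ (1 - σ * μ₁) * Real.exp (γ * T) := by
    have hpt0 := hptwise 0 ⟨le_refl 0, hT⟩
    rw [hQ0, hQT] at hQ0T
    rw [hu0, huT, hV0] at *
    have h5 : γ * (V T + (1 - σ * μ₁) / γ) ≤ γ * ((1 - σ * μ₁) / γ * Real.exp (γ * T)) :=
      mul_le_mul_of_nonneg_left hQ0T hγ.le
    have h6 : γ * ((1 - σ * μ₁) / γ * Real.exp (γ * T)) = (1 - σ * μ₁) * Real.exp (γ * T) := by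
      rw [← mul_assoc, hc]
    have h7 : γ * (V T + (1 - σ * μ₁) / γ) = γ * V T + (1 - σ * μ₁) := by
      rw [mul_add, hc]
    linarith
  have hratio : (1 - σ * μ₀) / (1 - σ * μ₁) ≤ Real.exp (γ * T) :=
    by rw [div_le_iff₀ hp₁]; linarith
  have hlog : Real.log ((1 - σ * μ₀) / (1 - σ * μ₁)) ≤ γ * T := by
    calc Real.log ((1 - σ * μ₀) / (1 - σ * μ₁)) ≤ Real.log (Real.exp (γ * T)) :=
          Real.log_le_log (div_pos hp₀ hp₁) hratio
      _ = γ * T := Real.log_exp _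
  rw [one_div, inv_mul_le_iff₀ hγ]
  exact hlog
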